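/- Let V be a real-analytic real-valued function on an open interval containing [α₀, β₀], and let E₀ ∈ ℝ satisfy V(α₀) = V(β₀) = E₀, V′(α₀) < 0, V′(β₀) > 0, and V(x) < E₀ for all x ∈ (α₀, β₀). For E real near E₀, let α(E) < β(E) denote the unique solutions of V(x) = E near α₀ and β₀ respectively (given by the implicit function theorem, so α, β are real-analytic with α(E₀) = α₀, β(E₀) = β₀), and define the action integral I(E) = ∫_{α(E)}^{β(E)} (E − V(x))^{1/2} dx. Then for each real E near E₀ the integral ∫_{α(E)}^{β(E)} (E − V(x))^{−1/2} dx converges, I is differentiable at E with I′(E) = (1/2) ∫_{α(E)}^{β(E)} (E − V(x))^{−1/2} dx, and in particular I′(E) > 0. -/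

import Mathlib

open MeasureTheory intervalIntegral Set Filter

lemma sqrt_inv_eq_rpow (x : ℝ) : (Real.sqrt x)⁻¹ = x ^ (-(1/2) : ℝ) := by
  rcases le_or_gt 0 x with h | h
  · rw [Real.sqrt_eq_rpow, ← Real.rpow_neg h]
  · rw [Real.sqrt_eq_zero_of_nonpos h.le, inv_zero, Real.rpow_def_of_neg h]
    norm_num
    rw [show (1/2 : ℝ) * Real.pi = Real.pi/2 by ring, Real.cos_pi_div_two]

lemma integrable_inv_sqrt_sub (a b : ℝ) :
    IntervalIntegrable (fun x => (Real.sqrt (x - a))⁻¹) volume a b := by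
  have h : IntervalIntegrable (fun x : ℝ => x ^ (-(1/2) : ℝ)) volume (a - a) (b - a) :=
    intervalIntegrable_rpow' (by norm_num)
  have := h.comp_sub_right a
  simpa [sqrt_inv_eq_rpow] using this

lemma integrable_inv_sqrt_sub' (a b : ℝ) :
    IntervalIntegrable (fun x => (Real.sqrt (b - x))⁻¹) volume a b := by
  have h : IntervalIntegrable (fun x : ℝ => x ^ (-(1/2) : ℝ)) volume (b - a) (b - b) :=
    intervalIntegrable_rpow' (by norm_num)
  have := h.comp_sub_left b
  simpa [sqrt_inv_eq_rpow] using this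

lemma sqrt_slope_bound {b h : ℝ} (hb : 0 < b) (hh : h ≠ 0) :
    |(Real.sqrt (b + h) - Real.sqrt b) / h| ≤ (Real.sqrt b)⁻¹ := by
  have sb := Real.sqrt_pos.mpr hb
  have hsb : Real.sqrt b ^ 2 = b := Real.sq_sqrt hb.le
  have hhp : 0 < |h| := abs_pos.mpr hh
  rw [abs_div, div_le_iff₀ hhp, inv_mul_eq_div, le_div_iff₀ sb]
  rcases le_or_gt 0 (b + h) with h' | h'
  · have hs2 : Real.sqrt (b + h) ^ 2 = b + h := Real.sq_sqrt h'
    have hs0 : 0 ≤ Real.sqrt (b + h) := Real.sqrt_nonneg _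
    rcases abs_cases (Real.sqrt (b + h) - Real.sqrt b) with ⟨e, _⟩ | ⟨e, _⟩ <;>
      rcases abs_cases h with ⟨e2, _⟩ | ⟨e2, _⟩ <;> nlinarith
  · have hz : Real.sqrt (b + h) = 0 := Real.sqrt_eq_zero_of_nonpos h'.le
    rcases abs_cases (Real.sqrt (b + h) - Real.sqrt b) with ⟨e, _⟩ | ⟨e, _⟩ <;>
      rcases abs_cases h with ⟨e2, _⟩ | ⟨e2, _⟩ <;> nlinarith

lemma mvt_core {V : ℝ → ℝ} {p q : ℝ}
    (hd : ∀ z ∈ Set.Icc p q, HasDerivAt V (deriv V z) z)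
    {u v : ℝ} (hu : u ∈ Set.Icc p q) (hv : v ∈ Set.Icc p q) (huv : u < v) :
    ∃ ξ ∈ Set.Icc p q, deriv V ξ = (V v - V u) / (v - u) := by
  have hsub : Set.Icc u v ⊆ Set.Icc p q := Set.Icc_subset_Icc hu.1 hv.2
  have cont : ContinuousOn V (Set.Icc u v) := fun z hz =>
    (hd z (hsub hz)).continuousAt.continuousWithinAt
  have diff : ∀ z ∈ Set.Ioo u v, HasDerivAt V (deriv V z) z := fun z hz =>
    hd z (hsub (Set.Ioo_subset_Icc_self hz))
  obtain ⟨ξ, hξ, heq⟩ := exists_hasDerivAt_eq_slope V (deriv V) huv cont diff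
  exact ⟨ξ, hsub (Set.Ioo_subset_Icc_self hξ), heq⟩

lemma mvt_abs_lower {V : ℝ → ℝ} {p q c : ℝ}
    (hd : ∀ z ∈ Set.Icc p q, HasDerivAt V (deriv V z) z)
    (hder : ∀ z ∈ Set.Icc p q, c ≤ |deriv V z|)
    {x y : ℝ} (hx : x ∈ Set.Icc p q) (hy : y ∈ Set.Icc p q) :
    c * |x - y| ≤ |V x - V y| := by
  have core : ∀ u v, u ∈ Set.Icc p q → v ∈ Set.Icc p q → u < v →
      c * (v - u) ≤ |V v - V u| := by
    intro u v hu hv huv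
    obtain ⟨ξ, hξ, heq⟩ := mvt_core hd hu hv huv
    have h1 := hder ξ hξ
    rw [heq, abs_div, abs_of_pos (sub_pos.mpr huv), le_div_iff₀ (sub_pos.mpr huv)] at h1
    exact h1
  rcases lt_trichotomy x y with h | h | h
  · rw [abs_sub_comm x y, abs_sub_comm (V x) (V y), abs_of_pos (sub_pos.mpr h)]
    exact core x y hx hy h
  · simp [h]
  · rw [abs_of_pos (sub_pos.mpr h)]
    exact core y x hy hx h

lemma mvt_abs_upper {V : ℝ → ℝ} {p q M : ℝ}
    (hd : ∀ z ∈ Set.Icc p q, HasDerivAt V (deriv V z) z)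
    (hder : ∀ z ∈ Set.Icc p q, |deriv V z| ≤ M)
    {x y : ℝ} (hx : x ∈ Set.Icc p q) (hy : y ∈ Set.Icc p q) :
    |V x - V y| ≤ M * |x - y| := by
  have core : ∀ u v, u ∈ Set.Icc p q → v ∈ Set.Icc p q → u < v →
      |V v - V u| ≤ M * (v - u) := by
    intro u v hu hv huv
    obtain ⟨ξ, hξ, heq⟩ := mvt_core hd hu hv huv
    have h1 := hder ξ hξ
    rw [heq, abs_div, abs_of_pos (sub_pos.mpr huv), div_le_iff₀ (sub_pos.mpr huv)] at h1
    linarith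
  rcases lt_trichotomy x y with h | h | h
  · rw [abs_sub_comm x y, abs_sub_comm (V x) (V y), abs_of_pos (sub_pos.mpr h)]
    exact core x y hx hy h
  · simp [h]
  · rw [abs_of_pos (sub_pos.mpr h)]
    exact core y x hy hx h

lemma mvt_dec {V : ℝ → ℝ} {p q c : ℝ}
    (hd : ∀ z ∈ Set.Icc p q, HasDerivAt V (deriv V z) z)
    (hder : ∀ z ∈ Set.Icc p q, deriv V z ≤ -c)
    {x y : ℝ} (hx : x ∈ Set.Icc p q) (hy : y ∈ Set.Icc p q) (hxy : x ≤ y) :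
    V y + c * (y - x) ≤ V x := by
  rcases eq_or_lt_of_le hxy with h | h
  · simp [h]
  · obtain ⟨ξ, hξ, heq⟩ := mvt_core hd hx hy h
    have h1 := hder ξ hξ
    rw [heq, div_le_iff₀ (sub_pos.mpr h)] at h1
    linarith

lemma mvt_inc {V : ℝ → ℝ} {p q c : ℝ}
    (hd : ∀ z ∈ Set.Icc p q, HasDerivAt V (deriv V z) z)
    (hder : ∀ z ∈ Set.Icc p q, c ≤ deriv V z)
    {x y : ℝ} (hx : x ∈ Set.Icc p q) (hy : y ∈ Set.Icc p q) (hxy : x ≤ y) :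
    V x + c * (y - x) ≤ V y := by
  rcases eq_or_lt_of_le hxy with h | h
  · simp [h]
  · obtain ⟨ξ, hξ, heq⟩ := mvt_core hd hx hy h
    have h1 := hder ξ hξ
    rw [heq, le_div_iff₀ (sub_pos.mpr h)] at h1
    linarith


lemma edge_bound {V : ℝ → ℝ} {p q M cc E' E p1 p2 : ℝ} (hcc : 0 < cc) (hM0 : 0 ≤ M)
    (hd : ∀ z ∈ Set.Icc p q, HasDerivAt V (deriv V z) z)
    (hM : ∀ z ∈ Set.Icc p q, |deriv V z| ≤ M)
    (h1 : p1 ∈ Set.Icc p q) (h2 : p2 ∈ Set.Icc p q)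
    (hV1 : V p1 = E') (hdist : |p1 - p2| ≤ |E' - E| / cc) :
    ‖∫ x in p1..p2, Real.sqrt (E' - V x)‖ ≤
      Real.sqrt (M * (|E' - E| / cc)) * (|E' - E| / cc) := by
  have hb : ∀ x ∈ Set.uIoc p1 p2, ‖Real.sqrt (E' - V x)‖ ≤
      Real.sqrt (M * (|E' - E| / cc)) := by
    intro x hx
    have hxJ : x ∈ Set.Icc p q := by
      rcases Set.mem_uIoc.mp hx with ⟨h3, h4⟩ | ⟨h3, h4⟩ <;>
        exact ⟨by linarith [h1.1, h2.1], by linarith [h1.2, h2.2]⟩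
    have hd2 : |p1 - x| ≤ |E' - E| / cc := by
      have h6 := abs_le.mp hdist
      rw [abs_le]
      rcases Set.mem_uIoc.mp hx with ⟨h3, h4⟩ | ⟨h3, h4⟩ <;>
        constructor <;> linarith [h6.1, h6.2]
    have hupper := mvt_abs_upper hd hM h1 hxJ
    rw [Real.norm_eq_abs, abs_of_nonneg (Real.sqrt_nonneg _)]
    apply Real.sqrt_le_sqrt
    calc E' - V x ≤ |V p1 - V x| := by rw [hV1] at *; exact le_abs_self _
      _ ≤ M * |p1 - x| := hupper
      _ ≤ M * (|E' - E| / cc) := mul_le_mul_of_nonneg_left hd2 hM0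
  have := intervalIntegral.norm_integral_le_of_norm_le_const hb
  refine le_trans this ?_
  have h7 : |p2 - p1| ≤ |E' - E| / cc := by rwa [abs_sub_comm]
  exact mul_le_mul_of_nonneg_left h7 (Real.sqrt_nonneg _)
set_option maxHeartbeats 1000000 in
/-- derivative of the action integral of a potential well. With `V`
real-analytic near `[α₀,β₀]`, `V(α₀) = V(β₀) = E₀`, `V′(α₀) < 0 < V′(β₀)`,
`V < E₀` on `(α₀,β₀)`, and `α(E) < β(E)` the turning points near `α₀, β₀` at
energy `E` near `E₀`, the action `I(E) = ∫_{α(E)}^{β(E)} √(E − V)` satisfies: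
`∫ (E − V)^{−1/2}` converges, `I′(E) = (1/2)∫_{α(E)}^{β(E)} (E − V(x))^{−1/2} dx`,
and in particular `I′(E) > 0`. -/
theorem stmt_14 (V : ℝ → ℝ) (α₀ β₀ E₀ : ℝ) (hαβ : α₀ < β₀)
    (U : Set ℝ) (hU : IsOpen U) (hIcc : Set.Icc α₀ β₀ ⊆ U)
    (hV : AnalyticOnNhd ℝ V U)
    (hVα : V α₀ = E₀) (hVβ : V β₀ = E₀)
    (hV'α : deriv V α₀ < 0) (hV'β : 0 < deriv V β₀)
    (hVlt : ∀ x ∈ Set.Ioo α₀ β₀, V x < E₀)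
    (α β : ℝ → ℝ) (δ : ℝ) (hδ : 0 < δ)
    (hα₀ : α E₀ = α₀) (hβ₀ : β E₀ = β₀)
    (hαc : ContinuousOn α (Set.Ioo (E₀ - δ) (E₀ + δ)))
    (hβc : ContinuousOn β (Set.Ioo (E₀ - δ) (E₀ + δ)))
    (hsol : ∀ E ∈ Set.Ioo (E₀ - δ) (E₀ + δ),
      V (α E) = E ∧ V (β E) = E ∧ α E < β E ∧ α E ∈ U ∧ β E ∈ U) :
    ∃ δ' > (0:ℝ), δ' ≤ δ ∧ ∀ E ∈ Set.Ioo (E₀ - δ') (E₀ + δ'),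
      IntervalIntegrable (fun x => (Real.sqrt (E - V x))⁻¹)
        MeasureTheory.volume (α E) (β E) ∧
      HasDerivAt (fun E' => ∫ x in α E'..β E', Real.sqrt (E' - V x))
        ((1/2) * ∫ x in α E..β E, (Real.sqrt (E - V x))⁻¹) E ∧
      0 < (1/2) * ∫ x in α E..β E, (Real.sqrt (E - V x))⁻¹ := by
  -- derivative facts about V
  have hVd : ∀ x ∈ U, HasDerivAt V (deriv V x) x := fun x hx =>
    ((hV x hx).differentiableAt).hasDerivAt
  have hV' : AnalyticOnNhd ℝ (deriv V) U := hV.deriv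
  -- the constant c
  set c : ℝ := min (-deriv V α₀) (deriv V β₀) / 2 with hc_def
  have hc : 0 < c := by
    have : 0 < min (-deriv V α₀) (deriv V β₀) := lt_min (by linarith) hV'β
    positivity
  -- choice of ε
  obtain ⟨ε, hε, hεU, hεlt, hεα, hεβ⟩ :
      ∃ ε > 0, Set.Icc (α₀ - ε) (β₀ + ε) ⊆ U ∧ 4 * ε < β₀ - α₀ ∧
        (∀ x ∈ Set.Icc (α₀ - ε) (α₀ + ε), deriv V x ≤ -c) ∧
        (∀ x ∈ Set.Icc (β₀ - ε) (β₀ + ε), c ≤ deriv V x) := by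

    have hα₀U : α₀ ∈ U := hIcc ⟨le_refl _, hαβ.le⟩
    have hβ₀U : β₀ ∈ U := hIcc ⟨hαβ.le, le_refl _⟩
    have hca : deriv V α₀ < -c := by
      have h1 := min_le_left (-deriv V α₀) (deriv V β₀)
      rw [hc_def]; linarith
    have hcb : c < deriv V β₀ := by
      have h1 := min_le_right (-deriv V α₀) (deriv V β₀)
      rw [hc_def]; linarith
    obtain ⟨ε₀, hε₀, hth⟩ :=
      (isCompact_Icc : IsCompact (Set.Icc α₀ β₀)).exists_cthickening_subset_open hU hIcc
    have hevα : ∀ᶠ x in nhds α₀, deriv V x < -c :=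
      ((hV' α₀ hα₀U).continuousAt).eventually_lt_const hca
    have hevβ : ∀ᶠ x in nhds β₀, c < deriv V x :=
      ((hV' β₀ hβ₀U).continuousAt).eventually_const_lt hcb
    rw [Metric.eventually_nhds_iff] at hevα hevβ
    obtain ⟨ε₁, hε₁, hball₁⟩ := hevα
    obtain ⟨ε₂, hε₂, hball₂⟩ := hevβ
    refine ⟨min (min ε₀ ((β₀ - α₀)/5)) (min (ε₁/2) (ε₂/2)),
      lt_min (lt_min hε₀ (by linarith)) (lt_min (by linarith) (by linarith)), ?_, ?_, ?_, ?_⟩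
    · intro x hx
      have hεε₀ : min (min ε₀ ((β₀ - α₀)/5)) (min (ε₁/2) (ε₂/2)) ≤ ε₀ :=
        le_trans (min_le_left _ _) (min_le_left _ _)
      have hy : max α₀ (min x β₀) ∈ Set.Icc α₀ β₀ :=
        ⟨le_max_left _ _, max_le hαβ.le (min_le_right _ _)⟩
      refine hth (Metric.mem_cthickening_of_dist_le x (max α₀ (min x β₀)) ε₀ _ hy ?_)
      rw [Real.dist_eq, abs_le]
      rcases le_total x α₀ with h | h
      · rw [min_eq_left (h.trans hαβ.le), max_eq_left h]
        constructor <;> linarith [hx.1, hx.2]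
      · rcases le_total x β₀ with h2 | h2
        · rw [min_eq_left h2, max_eq_right h]; constructor <;> linarith
        · rw [min_eq_right h2, max_eq_right hαβ.le]
          constructor <;> linarith [hx.1, hx.2]
    · have h5 : min (min ε₀ ((β₀ - α₀)/5)) (min (ε₁/2) (ε₂/2)) ≤ (β₀ - α₀)/5 :=
        le_trans (min_le_left _ _) (min_le_right _ _)
      linarith
    · intro x hx
      have hle : min (min ε₀ ((β₀ - α₀)/5)) (min (ε₁/2) (ε₂/2)) ≤ ε₁/2 :=
        le_trans (min_le_right _ _) (min_le_left _ _)
      refine (hball₁ ?_).le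
      rw [Real.dist_eq, abs_lt]
      constructor <;> [linarith [hx.1]; linarith [hx.2]]
    · intro x hx
      have hle : min (min ε₀ ((β₀ - α₀)/5)) (min (ε₁/2) (ε₂/2)) ≤ ε₂/2 :=
        le_trans (min_le_right _ _) (min_le_right _ _)
      refine (hball₂ ?_).le
      rw [Real.dist_eq, abs_lt]
      constructor <;> [linarith [hx.1]; linarith [hx.2]]

  set K : Set ℝ := Set.Icc (α₀ - ε) (β₀ + ε) with hK_def
  have hKd : ∀ z ∈ K, HasDerivAt V (deriv V z) z := fun z hz => hVd z (hεU hz)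
  have hKc : ContinuousOn V K := fun z hz => (hKd z hz).continuousAt.continuousWithinAt
  -- bound on the derivative
  obtain ⟨M, hM0, hM⟩ : ∃ M, 0 ≤ M ∧ ∀ x ∈ K, |deriv V x| ≤ M := by
    obtain ⟨C, hC⟩ := (isCompact_Icc).exists_bound_of_continuousOn
      (fun z hz => ((hV' z (hεU hz)).continuousAt).continuousWithinAt)
    exact ⟨max C 0, le_max_right _ _, fun x hx =>
      le_trans (by simpa using hC x hx) (le_max_left _ _)⟩
  -- gap in the middle
  obtain ⟨m, hm, hmid⟩ : ∃ m > 0, ∀ x ∈ Set.Icc (α₀ + ε) (β₀ - ε), V x ≤ E₀ - m := by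

    have hne : (Set.Icc (α₀ + ε) (β₀ - ε)).Nonempty := Set.nonempty_Icc.mpr (by linarith)
    have hsubm : Set.Icc (α₀ + ε) (β₀ - ε) ⊆ Set.Ioo α₀ β₀ := fun x hx =>
      ⟨by linarith [hx.1], by linarith [hx.2]⟩
    have hcontm : ContinuousOn V (Set.Icc (α₀ + ε) (β₀ - ε)) :=
      hKc.mono (fun x hx => ⟨by linarith [hx.1], by linarith [hx.2]⟩)
    obtain ⟨x₀, hx₀, hmax⟩ := isCompact_Icc.exists_isMaxOn hne hcontm
    exact ⟨E₀ - V x₀, by linarith [hVlt x₀ (hsubm hx₀)], fun x hx => by have h6 : V x ≤ V x₀ := hmax hx; linarith⟩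

  set L : ℝ := β₀ - α₀ + ε with hL_def
  have hL : 0 < L := by simp only [hL_def]; linarith
  set c₁ : ℝ := min c (m / (2 * L)) with hc₁_def
  have hc₁ : 0 < c₁ := lt_min hc (by positivity)
  -- choice of δ'
  obtain ⟨δ', hδ'0, hδ'δ, hδ'm, hδ'α, hδ'β⟩ :
      ∃ δ' > 0, δ' ≤ δ ∧ δ' ≤ m / 2 ∧
        (∀ E ∈ Set.Ioo (E₀ - δ') (E₀ + δ'), |α E - α₀| < ε / 2) ∧
        (∀ E ∈ Set.Ioo (E₀ - δ') (E₀ + δ'), |β E - β₀| < ε / 2) := by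

    have hcaα : ContinuousAt α E₀ :=
      hαc.continuousAt (Ioo_mem_nhds (by linarith) (by linarith))
    have hcaβ : ContinuousAt β E₀ :=
      hβc.continuousAt (Ioo_mem_nhds (by linarith) (by linarith))
    rw [Metric.continuousAt_iff] at hcaα hcaβ
    obtain ⟨δa, hδa, ha⟩ := hcaα (ε/2) (by linarith)
    obtain ⟨δb, hδb, hb⟩ := hcaβ (ε/2) (by linarith)
    refine ⟨min (min δa δb) (min δ (m/2)),
      lt_min (lt_min hδa hδb) (lt_min hδ (by linarith)), ?_, ?_, ?_, ?_⟩
    · exact le_trans (min_le_right _ _) (min_le_left _ _)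
    · exact le_trans (min_le_right _ _) (min_le_right _ _)
    · intro E hE
      have h2 : min (min δa δb) (min δ (m/2)) ≤ δa :=
        le_trans (min_le_left _ _) (min_le_left _ _)
      have h1 : dist E E₀ < δa := by
        rw [Real.dist_eq, abs_lt]
        constructor <;> [linarith [hE.1]; linarith [hE.2]]
      have := ha h1
      rwa [Real.dist_eq, hα₀] at this
    · intro E hE
      have h2 : min (min δa δb) (min δ (m/2)) ≤ δb :=
        le_trans (min_le_left _ _) (min_le_right _ _)
      have h1 : dist E E₀ < δb := by
        rw [Real.dist_eq, abs_lt]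
        constructor <;> [linarith [hE.1]; linarith [hE.2]]
      have := hb h1
      rwa [Real.dist_eq, hβ₀] at this

  -- basic facts for E in range
  have hrange : ∀ E ∈ Set.Ioo (E₀ - δ') (E₀ + δ'),
      V (α E) = E ∧ V (β E) = E ∧ α E < β E := by
    intro E hE
    have hE' : E ∈ Set.Ioo (E₀ - δ) (E₀ + δ) :=
      ⟨by linarith [hE.1], by linarith [hE.2]⟩
    exact ⟨(hsol E hE').1, (hsol E hE').2.1, (hsol E hE').2.2.1⟩
  have hαK : ∀ E ∈ Set.Ioo (E₀ - δ') (E₀ + δ'), α E ∈ Set.Icc (α₀ - ε) (α₀ + ε) := by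
    intro E hE
    have := hδ'α E hE
    rw [abs_lt] at this
    constructor <;> linarith [this.1, this.2]
  have hβK : ∀ E ∈ Set.Ioo (E₀ - δ') (E₀ + δ'), β E ∈ Set.Icc (β₀ - ε) (β₀ + ε) := by
    intro E hE
    have := hδ'β E hE
    rw [abs_lt] at this
    constructor <;> linarith [this.1, this.2]
  have hsubK : ∀ E ∈ Set.Ioo (E₀ - δ') (E₀ + δ'), Set.Icc (α E) (β E) ⊆ K := by
    intro E hE x hx
    have h1 := (hαK E hE).1
    have h2 := (hβK E hE).2
    exact ⟨le_trans (by linarith) hx.1, le_trans hx.2 (by linarith)⟩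
  -- the key lower bound
  have key : ∀ E ∈ Set.Ioo (E₀ - δ') (E₀ + δ'), ∀ x ∈ Set.Icc (α E) (β E),
      c₁ * min (x - α E) (β E - x) ≤ E - V x := by

    intro E hE x hx
    obtain ⟨hVa, hVb, hab⟩ := hrange E hE
    have hαI := hαK E hE
    have hβI := hβK E hE
    have hEm : |E - E₀| < m/2 := by
      rw [abs_lt]; constructor <;> [linarith [hE.1, hδ'm]; linarith [hE.2, hδ'm]]
    have hminnn : 0 ≤ min (x - α E) (β E - x) :=
      le_min (by linarith [hx.1]) (by linarith [hx.2])
    rcases le_total x (α₀ + ε) with hx1 | hx1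
    · have hxI : x ∈ Set.Icc (α₀ - ε) (α₀ + ε) := ⟨le_trans hαI.1 hx.1, hx1⟩
      have hKdα : ∀ z ∈ Set.Icc (α₀ - ε) (α₀ + ε), HasDerivAt V (deriv V z) z :=
        fun z hz => hKd z ⟨hz.1, le_trans hz.2 (by linarith)⟩
      have hmvt := mvt_dec hKdα hεα hαI hxI hx.1
      have hcc : c₁ ≤ c := min_le_left _ _
      have hmin : min (x - α E) (β E - x) ≤ x - α E := min_le_left _ _
      have h1 : c₁ * min (x - α E) (β E - x) ≤ c * min (x - α E) (β E - x) :=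
        mul_le_mul_of_nonneg_right hcc hminnn
      have h2 : c * min (x - α E) (β E - x) ≤ c * (x - α E) :=
        mul_le_mul_of_nonneg_left hmin hc.le
      rw [hVa] at hmvt
      linarith
    · rcases le_total (β₀ - ε) x with hx2 | hx2
      · have hxI : x ∈ Set.Icc (β₀ - ε) (β₀ + ε) := ⟨hx2, le_trans hx.2 hβI.2⟩
        have hKdβ : ∀ z ∈ Set.Icc (β₀ - ε) (β₀ + ε), HasDerivAt V (deriv V z) z :=
          fun z hz => hKd z ⟨le_trans (by linarith) hz.1, hz.2⟩
        have hmvt := mvt_inc hKdβ hεβ hxI hβI hx.2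
        have hcc : c₁ ≤ c := min_le_left _ _
        have hmin : min (x - α E) (β E - x) ≤ β E - x := min_le_right _ _
        have h1 : c₁ * min (x - α E) (β E - x) ≤ c * min (x - α E) (β E - x) :=
          mul_le_mul_of_nonneg_right hcc hminnn
        have h2 : c * min (x - α E) (β E - x) ≤ c * (β E - x) :=
          mul_le_mul_of_nonneg_left hmin hc.le
        rw [hVb] at hmvt
        linarith
      · have hVx := hmid x ⟨hx1, hx2⟩
        have hEdist := abs_lt.mp hEm
        have hminL : min (x - α E) (β E - x) ≤ L := by
          have h3 : min (x - α E) (β E - x) ≤ x - α E := min_le_left _ _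
          have h4 := hαI.1
          rw [hL_def]; linarith
        have h1 : c₁ * min (x - α E) (β E - x) ≤ (m / (2 * L)) * L :=
          mul_le_mul (min_le_right _ _) hminL hminnn (by positivity)
        have h2 : (m / (2 * L)) * L = m / 2 := by field_simp
        linarith

  -- positivity inside
  have pos : ∀ E ∈ Set.Ioo (E₀ - δ') (E₀ + δ'), ∀ x ∈ Set.Ioo (α E) (β E),
      0 < E - V x := by
    intro E hE x hx
    have := key E hE x ⟨hx.1.le, hx.2.le⟩
    have h1 : 0 < min (x - α E) (β E - x) := lt_min (by linarith [hx.1]) (by linarith [hx.2])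
    nlinarith
  -- integrability
  have integ : ∀ E ∈ Set.Ioo (E₀ - δ') (E₀ + δ'),
      IntervalIntegrable (fun x => (Real.sqrt (E - V x))⁻¹) volume (α E) (β E) := by

    intro E hE
    obtain ⟨hVa, hVb, hab⟩ := hrange E hE
    rw [intervalIntegrable_iff_integrableOn_Icc_of_le hab.le]
    have hKsub := hsubK E hE
    have hVcont : ContinuousOn V (Set.Icc (α E) (β E)) := hKc.mono hKsub
    have hmeas : AEStronglyMeasurable (fun x => (Real.sqrt (E - V x))⁻¹)
        (volume.restrict (Set.Icc (α E) (β E))) := by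
      have h1 : ContinuousOn (fun x => Real.sqrt (E - V x)) (Set.Icc (α E) (β E)) :=
        Real.continuous_sqrt.comp_continuousOn (continuousOn_const.sub hVcont)
      exact ((h1.aemeasurable measurableSet_Icc).inv).aestronglyMeasurable
    have hg : IntegrableOn
        (fun x => (Real.sqrt c₁)⁻¹ * ((Real.sqrt (x - α E))⁻¹ + (Real.sqrt (β E - x))⁻¹))
        (Set.Icc (α E) (β E)) volume := by
      have h2 := ((integrable_inv_sqrt_sub (α E) (β E)).add
        (integrable_inv_sqrt_sub' (α E) (β E))).const_mul (Real.sqrt c₁)⁻¹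
      rw [intervalIntegrable_iff_integrableOn_Icc_of_le hab.le] at h2
      exact h2
    refine hg.mono' hmeas ?_
    filter_upwards [ae_restrict_mem measurableSet_Icc] with x hx
    have hgnn : 0 ≤ (Real.sqrt c₁)⁻¹ * ((Real.sqrt (x - α E))⁻¹ + (Real.sqrt (β E - x))⁻¹) := by
      positivity
    rcases eq_or_lt_of_le hx.2 with hxb | hxb
    · have h0 : E - V x = 0 := by rw [hxb, hVb]; ring
      simpa [h0] using hgnn
    rcases eq_or_lt_of_le hx.1 with hxa | hxa
    · have h0 : E - V x = 0 := by rw [← hxa, hVa]; ring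
      simpa [h0] using hgnn
    have hpos := pos E hE x ⟨hxa, hxb⟩
    have hk := key E hE x hx
    have hmin0 : 0 < min (x - α E) (β E - x) := lt_min (by linarith) (by linarith)
    have h1 : Real.sqrt (c₁ * min (x - α E) (β E - x)) ≤ Real.sqrt (E - V x) :=
      Real.sqrt_le_sqrt hk
    have h2 : 0 < Real.sqrt (c₁ * min (x - α E) (β E - x)) :=
      Real.sqrt_pos.mpr (by positivity)
    rw [Real.norm_eq_abs, abs_of_nonneg (by positivity)]
    calc (Real.sqrt (E - V x))⁻¹
        ≤ (Real.sqrt (c₁ * min (x - α E) (β E - x)))⁻¹ := inv_anti₀ h2 h1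
      _ = (Real.sqrt c₁)⁻¹ * (Real.sqrt (min (x - α E) (β E - x)))⁻¹ := by
          rw [Real.sqrt_mul hc₁.le, mul_inv]
      _ ≤ (Real.sqrt c₁)⁻¹ * ((Real.sqrt (x - α E))⁻¹ + (Real.sqrt (β E - x))⁻¹) := by
          have hnn1 : (0:ℝ) ≤ (Real.sqrt (x - α E))⁻¹ := by positivity
          have hnn2 : (0:ℝ) ≤ (Real.sqrt (β E - x))⁻¹ := by positivity
          refine mul_le_mul_of_nonneg_left ?_ (by positivity)
          rcases min_cases (x - α E) (β E - x) with ⟨hmeq, _⟩ | ⟨hmeq, _⟩ <;>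
            rw [hmeq] <;> linarith

  -- positivity of the integral
  have ipos : ∀ E ∈ Set.Ioo (E₀ - δ') (E₀ + δ'),
      0 < (1/2) * ∫ x in α E..β E, (Real.sqrt (E - V x))⁻¹ := by
    intro E hE
    have h1 : 0 < ∫ x in α E..β E, (Real.sqrt (E - V x))⁻¹ := by
      apply intervalIntegral.intervalIntegral_pos_of_pos_on (integ E hE)
      · intro x hx
        have := pos E hE x hx
        positivity
      · exact (hrange E hE).2.2
    linarith
  -- the derivative
  have hderiv : ∀ E ∈ Set.Ioo (E₀ - δ') (E₀ + δ'),
      HasDerivAt (fun E' => ∫ x in α E'..β E', Real.sqrt (E' - V x))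
        ((1/2) * ∫ x in α E..β E, (Real.sqrt (E - V x))⁻¹) E := by

    intro E hE
    obtain ⟨hVa, hVb, hab⟩ := hrange E hE
    have hEopen : Set.Ioo (E₀ - δ') (E₀ + δ') ∈ nhds E := Ioo_mem_nhds hE.1 hE.2
    have hKsubE := hsubK E hE
    have hmemK : ∀ E'' ∈ Set.Ioo (E₀ - δ') (E₀ + δ'), α E'' ∈ K ∧ β E'' ∈ K := by
      intro E'' h''
      have h1 := hαK E'' h''
      have h2 := hβK E'' h''
      exact ⟨⟨h1.1, by linarith [h1.2]⟩, ⟨by linarith [h2.1], h2.2⟩⟩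
    -- interval integrability of the square-root integrand between any two points of K
    have hcontK : ∀ (E'' p q : ℝ), p ∈ K → q ∈ K →
        IntervalIntegrable (fun x => Real.sqrt (E'' - V x)) volume p q := by
      intro E'' p q hp hq
      apply ContinuousOn.intervalIntegrable
      have hsub : Set.uIcc p q ⊆ K := Set.uIcc_subset_Icc hp hq
      exact Real.continuous_sqrt.comp_continuousOn (continuousOn_const.sub (hKc.mono hsub))
    -- Lipschitz bound for the turning points
    have hαlip : ∀ E' ∈ Set.Ioo (E₀ - δ') (E₀ + δ'), c * |α E' - α E| ≤ |E' - E| := by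
      intro E' hE'
      have hKdα : ∀ z ∈ Set.Icc (α₀ - ε) (α₀ + ε), HasDerivAt V (deriv V z) z :=
        fun z hz => hKd z ⟨hz.1, by linarith [hz.2]⟩
      have habs : ∀ z ∈ Set.Icc (α₀ - ε) (α₀ + ε), c ≤ |deriv V z| := fun z hz =>
        le_abs.mpr (Or.inr (by linarith [hεα z hz]))
      have h := mvt_abs_lower hKdα habs (hαK E' hE') (hαK E hE)
      obtain ⟨hVa', _, _⟩ := hrange E' hE'
      rwa [hVa', hVa] at h
    have hβlip : ∀ E' ∈ Set.Ioo (E₀ - δ') (E₀ + δ'), c * |β E' - β E| ≤ |E' - E| := by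
      intro E' hE'
      have hKdβ : ∀ z ∈ Set.Icc (β₀ - ε) (β₀ + ε), HasDerivAt V (deriv V z) z :=
        fun z hz => hKd z ⟨by linarith [hz.1], hz.2⟩
      have habs : ∀ z ∈ Set.Icc (β₀ - ε) (β₀ + ε), c ≤ |deriv V z| := fun z hz =>
        le_abs.mpr (Or.inl (hεβ z hz))
      have h := mvt_abs_lower hKdβ habs (hβK E' hE') (hβK E hE)
      obtain ⟨_, hVb', _⟩ := hrange E' hE'
      rwa [hVb', hVb] at h
    -- the common vanishing bound for the edge quotients
    have gbound : Tendsto (fun E' => Real.sqrt (M * (|E' - E| / c)) / c) (nhds E)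
        (nhds 0) := by
      have t1 : Tendsto (fun E' : ℝ => |E' - E|) (nhds E) (nhds 0) := by
        have := ((continuous_id.sub (continuous_const (y := E))).abs).tendsto E
        simpa using this
      have t2 : Tendsto (fun E' : ℝ => M * (|E' - E| / c)) (nhds E) (nhds (M * (0 / c))) :=
        (t1.div_const c).const_mul M
      have t3 := (Real.continuous_sqrt.tendsto (M * (0 / c))).comp t2
      have t4 := t3.div_const c
      simpa using t4
    -- edge terms tend to zero
    have tendsto_edgeα : Tendsto
        (fun E' => (∫ x in α E'..α E, Real.sqrt (E' - V x)) / (E' - E)) (nhdsWithin E {E}ᶜ)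
        (nhds 0) := by
      apply squeeze_zero_norm'
        (a := fun E' => Real.sqrt (M * (|E' - E| / c)) / c)
      · filter_upwards [self_mem_nhdsWithin, nhdsWithin_le_nhds hEopen] with E' hne' hE'mem
        have hne2 : E' - E ≠ 0 := sub_ne_zero.mpr hne'
        have hKdα : ∀ z ∈ Set.Icc (α₀ - ε) (α₀ + ε), HasDerivAt V (deriv V z) z :=
          fun z hz => hKd z ⟨hz.1, by linarith [hz.2]⟩
        have hMα : ∀ z ∈ Set.Icc (α₀ - ε) (α₀ + ε), |deriv V z| ≤ M :=
          fun z hz => hM z ⟨hz.1, by linarith [hz.2]⟩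
        obtain ⟨hVa', _, _⟩ := hrange E' hE'mem
        have hdist : |α E' - α E| ≤ |E' - E| / c := by
          rw [le_div_iff₀ hc]
          have := hαlip E' hE'mem
          linarith
        have hedge := edge_bound hc hM0 hKdα hMα (hαK E' hE'mem) (hαK E hE) hVa' hdist
        rw [norm_div, Real.norm_eq_abs (E' - E), div_le_iff₀ (abs_pos.mpr hne2)]
        refine le_trans hedge (le_of_eq ?_)
        ring
      · exact gbound.mono_left nhdsWithin_le_nhds
    have tendsto_edgeβ : Tendsto
        (fun E' => (∫ x in β E..β E', Real.sqrt (E' - V x)) / (E' - E)) (nhdsWithin E {E}ᶜ)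
        (nhds 0) := by
      apply squeeze_zero_norm'
        (a := fun E' => Real.sqrt (M * (|E' - E| / c)) / c)
      · filter_upwards [self_mem_nhdsWithin, nhdsWithin_le_nhds hEopen] with E' hne' hE'mem
        have hne2 : E' - E ≠ 0 := sub_ne_zero.mpr hne'
        have hKdβ : ∀ z ∈ Set.Icc (β₀ - ε) (β₀ + ε), HasDerivAt V (deriv V z) z :=
          fun z hz => hKd z ⟨by linarith [hz.1], hz.2⟩
        have hMβ : ∀ z ∈ Set.Icc (β₀ - ε) (β₀ + ε), |deriv V z| ≤ M :=
          fun z hz => hM z ⟨by linarith [hz.1], hz.2⟩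
        obtain ⟨_, hVb', _⟩ := hrange E' hE'mem
        have hdist : |β E' - β E| ≤ |E' - E| / c := by
          rw [le_div_iff₀ hc]
          have := hβlip E' hE'mem
          linarith
        have hedge := edge_bound hc hM0 hKdβ hMβ (hβK E' hE'mem) (hβK E hE) hVb' hdist
        rw [intervalIntegral.integral_symm, norm_div, norm_neg, Real.norm_eq_abs (E' - E),
          div_le_iff₀ (abs_pos.mpr hne2)]
        refine le_trans hedge (le_of_eq ?_)
        ring
      · exact gbound.mono_left nhdsWithin_le_nhds
    -- almost everywhere x is not an endpoint
    have hbae : ∀ᵐ x ∂(volume : Measure ℝ), x ≠ β E := by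
      rw [ae_iff]
      simp only [not_not]
      simpa using measure_singleton (β E)
    -- the middle term: dominated convergence
    have middle : Tendsto
        (fun E' => ∫ x in α E..β E,
          (Real.sqrt (E' - V x) - Real.sqrt (E - V x)) / (E' - E)) (nhdsWithin E {E}ᶜ)
        (nhds (∫ x in α E..β E, 1 / (2 * Real.sqrt (E - V x)))) := by
      apply intervalIntegral.tendsto_integral_filter_of_dominated_convergence
        (bound := fun x => (Real.sqrt (E - V x))⁻¹)
      · apply Filter.Eventually.of_forall
        intro E'
        have hcont : ContinuousOn
            (fun x => (Real.sqrt (E' - V x) - Real.sqrt (E - V x)) / (E' - E))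
            (Set.Icc (α E) (β E)) := by
          apply ContinuousOn.div_const
          exact (Real.continuous_sqrt.comp_continuousOn
            (continuousOn_const.sub (hKc.mono hKsubE))).sub
            (Real.continuous_sqrt.comp_continuousOn
            (continuousOn_const.sub (hKc.mono hKsubE)))
        refine (hcont.aestronglyMeasurable measurableSet_Icc).mono_measure
          (Measure.restrict_mono ?_ le_rfl)
        rw [Set.uIoc_of_le hab.le]
        exact Set.Ioc_subset_Icc_self
      · filter_upwards [self_mem_nhdsWithin] with E' hne'
        filter_upwards [hbae] with x hxb hxI
        rw [Set.uIoc_of_le hab.le] at hxI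
        have hxoo : x ∈ Set.Ioo (α E) (β E) := ⟨hxI.1, lt_of_le_of_ne hxI.2 hxb⟩
        have hbpos := pos E hE x hxoo
        have h' : E' - V x = (E - V x) + (E' - E) := by ring
        rw [Real.norm_eq_abs, h']
        exact sqrt_slope_bound hbpos (sub_ne_zero.mpr hne')
      · exact integ E hE
      · filter_upwards [hbae] with x hxb hxI
        rw [Set.uIoc_of_le hab.le] at hxI
        have hxoo : x ∈ Set.Ioo (α E) (β E) := ⟨hxI.1, lt_of_le_of_ne hxI.2 hxb⟩
        have hbpos := pos E hE x hxoo
        have hφ : HasDerivAt (fun E' => Real.sqrt (E' - V x))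
            (1 / (2 * Real.sqrt (E - V x))) E := by
          have h1 : HasDerivAt (fun E' : ℝ => E' - V x) 1 E :=
            (hasDerivAt_id E).sub_const (V x)
          have h2 := (Real.hasDerivAt_sqrt (ne_of_gt hbpos)).comp E h1
          exact h1.sqrt (ne_of_gt hbpos)
        have h3 := hasDerivAt_iff_tendsto_slope.mp hφ
        apply h3.congr
        intro E'
        rw [slope_def_field]
    -- the splitting of the difference quotient
    have split : ∀ᶠ E' in nhdsWithin E {E}ᶜ,
        (∫ x in α E'..α E, Real.sqrt (E' - V x)) / (E' - E)
          + (∫ x in α E..β E, (Real.sqrt (E' - V x) - Real.sqrt (E - V x)) / (E' - E))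
          + (∫ x in β E..β E', Real.sqrt (E' - V x)) / (E' - E)
        = slope (fun E'' => ∫ x in α E''..β E'', Real.sqrt (E'' - V x)) E E' := by
      filter_upwards [self_mem_nhdsWithin, nhdsWithin_le_nhds hEopen] with E' hne' hE'mem
      have hne2 : E' - E ≠ 0 := sub_ne_zero.mpr hne'
      obtain ⟨hαK', hβK'⟩ := hmemK E' hE'mem
      obtain ⟨hαKE, hβKE⟩ := hmemK E hE
      have hadd1 := integral_add_adjacent_intervals
        (hcontK E' (α E') (α E) hαK' hαKE) (hcontK E' (α E) (β E) hαKE hβKE)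
      have hadd2 := integral_add_adjacent_intervals
        (a := α E') (b := β E) (c := β E')
        ((hcontK E' (α E') (α E) hαK' hαKE).trans (hcontK E' (α E) (β E) hαKE hβKE))
        (hcontK E' (β E) (β E') hβKE hβK')
      have hmid : (∫ x in α E..β E,
          (Real.sqrt (E' - V x) - Real.sqrt (E - V x)) / (E' - E))
          = ((∫ x in α E..β E, Real.sqrt (E' - V x))
            - ∫ x in α E..β E, Real.sqrt (E - V x)) * (E' - E)⁻¹ := by
        simp_rw [div_eq_mul_inv]
        rw [intervalIntegral.integral_mul_const,
          intervalIntegral.integral_sub (hcontK E' (α E) (β E) hαKE hβKE)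
            (hcontK E (α E) (β E) hαKE hβKE)]
      rw [slope_def_field, hmid]
      rw [← hadd2, ← hadd1]
      field_simp
      ring
    rw [hasDerivAt_iff_tendsto_slope]
    have hsum := (tendsto_edgeα.add middle).add tendsto_edgeβ
    have hlim : (0 : ℝ) + (∫ x in α E..β E, 1 / (2 * Real.sqrt (E - V x))) + 0
        = (1/2) * ∫ x in α E..β E, (Real.sqrt (E - V x))⁻¹ := by
      rw [zero_add, add_zero]
      simp_rw [one_div, mul_inv]
      rw [intervalIntegral.integral_const_mul]
    rw [hlim] at hsum
    exact hsum.congr' split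

  exact ⟨δ', hδ'0, hδ'δ, fun E hE => ⟨integ E hE, hderiv E hE, ipos E hE⟩⟩
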